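/- Let N ⊴ G with G-module M, and let d : N → M be a derivation whose class in H¹(N,M) is fixed by the conjugation action of all of G up to inner derivations. Let H = {(d(n), n) | n ∈ N} ⊆ M ⋊ G. Then (m,g) ∈ N_{M⋊G}(H) if and only if (ᵍd − d)(n) = n·m − m for all n ∈ N. -/

import Mathlib

/-- A derivation `d : N → M` on a subgroup `N ≤ G` (multiplicative notation). -/
def IsDer {M G : Type*} [CommGroup M] [Group G] (φ : G →* MulAut M) (N : Subgroup G)
    (d : N → M) : Prop :=
  ∀ n n' : N, d (n * n') = d n * φ (n : G) (d n')

/-- Conjugate of `n ∈ N` by `g⁻¹`: the element `g⁻¹ n g` of the normal subgroup `N`. -/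
def conjElt {G : Type*} [Group G] (N : Subgroup G) (hN : N.Normal) (g : G) (n : N) : N :=
  ⟨g⁻¹ * (n : G) * g, by simpa using hN.conj_mem _ n.2 g⁻¹⟩

/-- The conjugation action of `g ∈ G` on maps `N → M`: `(ᵍd)(n) = g · d(g⁻¹ n g)`. -/
def conjDer {M G : Type*} [CommGroup M] [Group G] (φ : G →* MulAut M) (N : Subgroup G)
    (hN : N.Normal) (g : G) (d : N → M) : N → M :=
  fun n => φ g (d (conjElt N hN g n))

section Aux
variable {M G : Type*} [CommGroup M] [Group G] (φ : G →* MulAut M)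
  (N : Subgroup G) (hN : N.Normal)

lemma conjElt_conjElt (g : G) (n : N) : conjElt N hN g (conjElt N hN g⁻¹ n) = n := by
  ext; simp [conjElt]; group

lemma coe_conjElt (g : G) (n : N) : (conjElt N hN g n : G) = g⁻¹ * n * g := rfl

lemma hE_inv (d : N → M) (g : G) (m : M)
    (hE : ∀ n : N, conjDer φ N hN g d n * (d n)⁻¹ = φ (n : G) m * m⁻¹) :
    ∀ n : N, conjDer φ N hN g⁻¹ d n * (d n)⁻¹
      = φ (n : G) (φ g⁻¹ m⁻¹) * (φ g⁻¹ m⁻¹)⁻¹ := by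
  intro n
  have h := hE (conjElt N hN g⁻¹ n)
  rw [show conjDer φ N hN g d (conjElt N hN g⁻¹ n) = φ g (d n) by
    unfold conjDer; rw [conjElt_conjElt]] at h
  have h2 := congrArg (φ g⁻¹) h
  simp only [map_mul, map_inv] at h2 ⊢
  have key : (φ g)⁻¹ (φ (↑(conjElt N hN g⁻¹ n)) m) = φ (n : G) ((φ g)⁻¹ m) := by
    rw [← map_inv, ← MulAut.mul_apply, ← MulAut.mul_apply, ← map_mul, ← map_mul,
      coe_conjElt]
    congr 1
    group
  rw [key] at h2
  unfold conjDer
  simp only [map_inv]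
  have h3 := congrArg (·⁻¹) h2
  simp only [mul_inv_rev, inv_inv, MulAut.apply_inv_self, MulAut.inv_apply_self] at h3 ⊢
  simpa [mul_comm] using h3

lemma conj_mem (d : N → M) (H : Subgroup (M ⋊[φ] G))
    (hH : (H : Set (M ⋊[φ] G)) = {x | ∃ n : N, x = ⟨d n, (n : G)⟩})
    (m : M) (g : G)
    (hE : ∀ n : N, conjDer φ N hN g d n * (d n)⁻¹ = φ (n : G) m * m⁻¹) :
    ∀ h ∈ H, (⟨m, g⟩ : M ⋊[φ] G) * h * (⟨m, g⟩ : M ⋊[φ] G)⁻¹ ∈ H := by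
  intro h hh
  rw [← SetLike.mem_coe, hH] at hh ⊢
  obtain ⟨n, rfl⟩ := hh
  refine ⟨conjElt N hN g⁻¹ n, ?_⟩
  have hE' := hE (conjElt N hN g⁻¹ n)
  rw [show conjDer φ N hN g d (conjElt N hN g⁻¹ n) = φ g (d n) from by
    unfold conjDer; rw [conjElt_conjElt]] at hE'
  have hE'' : φ g (d n) = φ (↑(conjElt N hN g⁻¹ n)) m * m⁻¹ * d (conjElt N hN g⁻¹ n) :=
    mul_inv_eq_iff_eq_mul.mp hE'
  have hdn' : d (conjElt N hN g⁻¹ n) = m * φ g (d n) * (φ (↑(conjElt N hN g⁻¹ n)) m)⁻¹ := by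
    rw [hE'']
    simp [mul_comm, mul_left_comm, mul_assoc]
  ext
  · show m * φ g (d n) * φ (g * ↑n) (φ g⁻¹ m⁻¹) = d (conjElt N hN g⁻¹ n)
    rw [hdn', coe_conjElt]
    have : φ (g * ↑n) (φ g⁻¹ m⁻¹) = (φ ((g⁻¹)⁻¹ * ↑n * g⁻¹) m)⁻¹ := by
      rw [← MulAut.mul_apply, ← map_mul, map_inv]
      congr 2
      group
    rw [this]
  · show g * ↑n * g⁻¹ = ↑(conjElt N hN g⁻¹ n)
    rw [coe_conjElt]; group

end Aux

/-- For a derivation `d : N → M` whose class is fixed by the conjugation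
action of `G` up to inner derivations, and `H = {(d(n), n) | n ∈ N} ⊆ M ⋊ G`, an element
`(m,g)` lies in the normalizer of `H` iff `(ᵍd / d)(n) = (n·m) m⁻¹` for all `n ∈ N`. -/


theorem mem_normalizer_iff (M G : Type*) [CommGroup M] [Group G] (φ : G →* MulAut M)
    (N : Subgroup G) (hN : N.Normal)
    (d : N → M) (hd : IsDer φ N d)
    (hQ : ∀ g : G, ∃ m : M, ∀ n : N,
      conjDer φ N hN g d n * (d n)⁻¹ = φ (n : G) m * m⁻¹)
    (H : Subgroup (M ⋊[φ] G))
    (hH : (H : Set (M ⋊[φ] G)) = {x | ∃ n : N, x = ⟨d n, (n : G)⟩}) :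
    ∀ (m : M) (g : G),
      (⟨m, g⟩ : M ⋊[φ] G) ∈ Subgroup.normalizer (H : Set (M ⋊[φ] G)) ↔
        ∀ n : N, conjDer φ N hN g d n * (d n)⁻¹ = φ (n : G) m * m⁻¹ := by
  intro m g
  constructor
  · intro hx n
    set k := conjElt N hN g n with hk
    have hn : (⟨d k, (k : G)⟩ : M ⋊[φ] G) ∈ H := by
      rw [← SetLike.mem_coe, hH]; exact ⟨k, rfl⟩
    have hc := (Subgroup.mem_normalizer_iff.mp hx _).mp hn
    rw [← SetLike.mem_coe, hH] at hc
    obtain ⟨n', hn'⟩ := hc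
    have hr := congrArg SemidirectProduct.right hn'
    simp only [SemidirectProduct.mul_right, SemidirectProduct.inv_right] at hr
    have hkn : g * (k : G) * g⁻¹ = (n : G) := by rw [hk, coe_conjElt]; group
    have hnn' : n' = n := Subtype.ext (by rw [← hr, hkn])
    have hl := congrArg SemidirectProduct.left hn'
    simp only [SemidirectProduct.mul_left, SemidirectProduct.inv_left,
      SemidirectProduct.mul_right] at hl
    rw [hnn'] at hl
    have hφ : φ (g * (k : G)) (φ g⁻¹ m⁻¹) = (φ (n : G) m)⁻¹ := by
      rw [← MulAut.mul_apply, ← map_mul, hkn, map_inv]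
    rw [hφ] at hl
    have hcd : conjDer φ N hN g d n = φ g (d k) := rfl
    rw [hcd, ← hl]
    simp [mul_inv_rev, mul_comm, mul_left_comm, mul_assoc]
  · intro hE
    rw [Subgroup.mem_normalizer_iff]
    intro h
    constructor
    · exact conj_mem φ N hN d H hH m g hE h
    · intro hh
      have h2 := conj_mem φ N hN d H hH (φ g⁻¹ m⁻¹) g⁻¹
        (hE_inv φ N hN d g m hE) _ hh
      have hx : (⟨φ g⁻¹ m⁻¹, g⁻¹⟩ : M ⋊[φ] G) = (⟨m, g⟩ : M ⋊[φ] G)⁻¹ := rfl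
      rw [hx] at h2
      simpa [mul_assoc] using h2
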